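/- arXiv:0707.3781 — 2 statements merged into one kernel-verified Lean document; each statement's English description precedes it below -/
import Mathlib

section
/- In Reiter default logic, two distinct extensions of the same default theory are incomparable under set inclusion is NOT required for arbitrary semantics; specifically, the default theory with empty background theory and defaults {(⊤, a, b), (⊤, ¬a, b)} has exactly one extension Cn({b}) in constrained semantics, but two distinct double extensions ⟨{a}, Cn({b})⟩ and ⟨{¬a}, Cn({b})⟩. -/
universe u

/-- Semantic propositional formulae over variables `V`. -/
def Form (V : Type u) : Type u := (V → Bool) → Prop

/-- Semantic entailment between formulae. -/
def Entails {V : Type u} (A C : Form V) : Prop := ∀ v, A v → C v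

/-- Satisfaction of a set of formulae by an assignment. -/
def SetSat {V : Type u} (S : Set (Form V)) (v : V → Bool) : Prop := ∀ A ∈ S, A v

/-- Entailment from a set of formulae. -/
def SetEntails {V : Type u} (S : Set (Form V)) (C : Form V) : Prop :=
  ∀ v, SetSat S v → C v

/-- Consistency of a set of formulae. -/
def Consistent {V : Type u} (S : Set (Form V)) : Prop := ∃ v, SetSat S v

/-- A formula does not depend on (does not contain) the variable `a`. -/
def IndepOf {V : Type u} [DecidableEq V] (A : Form V) (a : V) : Prop :=
  ∀ (v : V → Bool) (c : Bool), A (Function.update v a c) ↔ A v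

/-- A formula contains only variables in `X`. -/
def VarsIn {V : Type u} [DecidableEq V] (γ : Form V) (X : Set V) : Prop :=
  ∀ a ∉ X, IndepOf γ a

/-- Var-equivalence with respect to a set of variables `X`. -/
def VarEquiv {V : Type u} [DecidableEq V] (X : Set V) (α β : Form V) : Prop :=
  ∀ γ : Form V, VarsIn γ X → (Entails α γ ↔ Entails β γ)

/-- A default: precondition, justification, consequence. -/
structure Default (V : Type u) where
  prec : Form V
  just : Form V
  cons : Form V

/-- The set of consequences of the defaults in a sequence. -/
def consSet {V : Type u} (Pr : List (Default V)) : Set (Form V) :=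
  {φ | ∃ d ∈ Pr, d.cons = φ}

/-- The set of justifications of the defaults in a sequence. -/
def justSet {V : Type u} (Pr : List (Default V)) : Set (Form V) :=
  {φ | ∃ d ∈ Pr, d.just = φ}

/-- A process of the default theory `⟨D, W⟩`: a sequence of distinct defaults
from `D` with consistent consequences, each precondition entailed by the
background theory together with the consequences of the earlier defaults. -/
def IsProcess {V : Type u} (D : Set (Default V)) (W : Set (Form V))
    (Pr : List (Default V)) : Prop :=
  (∀ d ∈ Pr, d ∈ D) ∧ Pr.Nodup ∧ Consistent (W ∪ consSet Pr) ∧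
    ∀ i : Fin Pr.length, SetEntails (W ∪ consSet (Pr.take i)) (Pr.get i).prec

/-- Global success of a sequence of defaults. -/
def GlobSucc {V : Type u} (W : Set (Form V)) (Pr : List (Default V)) : Prop :=
  Consistent (W ∪ consSet Pr ∪ justSet Pr)

/-- Local success of a sequence of defaults. -/
def LocSucc {V : Type u} (W : Set (Form V)) (Pr : List (Default V)) : Prop :=
  ∀ d ∈ Pr, Consistent (W ∪ consSet Pr ∪ {d.just})

/-- A globally successful process. -/
def GlobSuccProcess {V : Type u} (D : Set (Default V)) (W : Set (Form V))
    (Pr : List (Default V)) : Prop :=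
  IsProcess D W Pr ∧ GlobSucc W Pr

/-- A locally successful process. -/
def LocSuccProcess {V : Type u} (D : Set (Default V)) (W : Set (Form V))
    (Pr : List (Default V)) : Prop :=
  IsProcess D W Pr ∧ LocSucc W Pr

/-- A constrained process: maximal globally successful process. -/
def ConstrainedProcess {V : Type u} (D : Set (Default V)) (W : Set (Form V))
    (Pr : List (Default V)) : Prop :=
  GlobSuccProcess D W Pr ∧
    ∀ d ∈ D, d ∉ Pr → ¬ GlobSuccProcess D W (Pr ++ [d])

/-- A rational process: globally successful process closed under global
applicability. -/
def RationalProcess {V : Type u} (D : Set (Default V)) (W : Set (Form V))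
    (Pr : List (Default V)) : Prop :=
  GlobSuccProcess D W Pr ∧
    ∀ d ∈ D, d ∉ Pr →
      ¬ (SetEntails (W ∪ consSet Pr) d.prec ∧
          Consistent (W ∪ consSet Pr ∪ justSet Pr ∪ {d.just}))

/-- A justified process: maximal locally successful process. -/
def JustifiedProcess {V : Type u} (D : Set (Default V)) (W : Set (Form V))
    (Pr : List (Default V)) : Prop :=
  LocSuccProcess D W Pr ∧
    ∀ d ∈ D, d ∉ Pr → ¬ LocSuccProcess D W (Pr ++ [d])

/-- A Reiter process: locally successful process closed under local
applicability. -/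
def ReiterProcess {V : Type u} (D : Set (Default V)) (W : Set (Form V))
    (Pr : List (Default V)) : Prop :=
  LocSuccProcess D W Pr ∧
    ∀ d ∈ D, d ∉ Pr →
      ¬ (SetEntails (W ∪ consSet Pr) d.prec ∧
          Consistent (W ∪ consSet Pr ∪ {d.just}))

/-- Deductive closure. -/
def Cn {V : Type u} (S : Set (Form V)) : Set (Form V) := {φ | SetEntails S φ}

/-- The extension generated by a process. -/
def ext {V : Type u} (W : Set (Form V)) (Pr : List (Default V)) : Set (Form V) :=
  Cn (W ∪ consSet Pr)

/-- The seminormal translation: conjoin each default's consequence to its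
justification. -/
def TCR {V : Type u} (d : Default V) : Default V :=
  ⟨d.prec, fun v => d.just v ∧ d.cons v, d.cons⟩

section Aux

def aF0 : Form (Fin 2) := fun v => v 0 = true
def naF0 : Form (Fin 2) := fun v => v 0 = false
def bF0 : Form (Fin 2) := fun v => v 1 = true
def d10 : Default (Fin 2) := ⟨fun _ => True, aF0, bF0⟩
def d20 : Default (Fin 2) := ⟨fun _ => True, naF0, bF0⟩
def D0 : Set (Default (Fin 2)) := {d10, d20}
def W0 : Set (Form (Fin 2)) := ∅

lemma aF_ne_naF : aF0 ≠ naF0 := by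
  intro h
  have h1 : aF0 (fun _ => true) := rfl
  rw [h] at h1
  simp [naF0] at h1

lemma d1_ne_d2 : d10 ≠ d20 := by
  intro h
  apply aF_ne_naF
  exact congrArg Default.just h

lemma cons_single (d : Default (Fin 2)) : consSet [d] = {d.cons} := by
  ext φ; simp [consSet]

lemma just_single (d : Default (Fin 2)) : justSet [d] = {d.just} := by
  ext φ; simp [justSet]

lemma ext_single (d : Default (Fin 2)) (h : d.cons = bF0) :
    ext W0 [d] = Cn ({bF0} : Set (Form (Fin 2))) := by
  unfold ext
  have h2 : W0 ∪ consSet [d] = {bF0} := by rw [cons_single, h, W0]; simp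
  rw [h2]

lemma gsp1 : GlobSuccProcess D0 W0 [d10] := by
  refine ⟨⟨?_, ?_, ?_, ?_⟩, ?_⟩
  · intro d hd; simp at hd; subst hd; exact Or.inl rfl
  · simp
  · exact ⟨fun _ => true, by
      intro A hA
      rcases hA with hA | hA
      · exact absurd hA (Set.notMem_empty A)
      · rw [cons_single] at hA; simp at hA; subst hA; rfl⟩
  · intro i v _; fin_cases i <;> trivial
  · exact ⟨fun _ => true, by
      intro A hA
      rcases hA with (hA | hA) | hA
      · exact absurd hA (Set.notMem_empty A)
      · rw [cons_single] at hA; simp at hA; subst hA; rfl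
      · rw [just_single] at hA; simp at hA; subst hA; rfl⟩

lemma gsp2 : GlobSuccProcess D0 W0 [d20] := by
  refine ⟨⟨?_, ?_, ?_, ?_⟩, ?_⟩
  · intro d hd; simp at hd; subst hd; exact Or.inr rfl
  · simp
  · exact ⟨fun _ => true, by
      intro A hA
      rcases hA with hA | hA
      · exact absurd hA (Set.notMem_empty A)
      · rw [cons_single] at hA; simp at hA; subst hA; rfl⟩
  · intro i v _; fin_cases i <;> trivial
  · exact ⟨![false, true], by
      intro A hA
      rcases hA with (hA | hA) | hA
      · exact absurd hA (Set.notMem_empty A)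
      · rw [cons_single] at hA; simp at hA; subst hA; rfl
      · rw [just_single] at hA; simp at hA; subst hA; rfl⟩

/-- If a list contains both d10 and d20, it is not globally successful. -/
lemma not_gs_both (Pr : List (Default (Fin 2))) (h1 : d10 ∈ Pr) (h2 : d20 ∈ Pr) :
    ¬ GlobSucc W0 Pr := by
  rintro ⟨v, hv⟩
  have ha : aF0 v := hv aF0 (Or.inr ⟨d10, h1, rfl⟩)
  have hna : naF0 v := hv naF0 (Or.inr ⟨d20, h2, rfl⟩)
  simp [aF0, naF0] at ha hna
  rw [ha] at hna; simp at hna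

lemma cp1 : ConstrainedProcess D0 W0 [d10] := by
  refine ⟨gsp1, ?_⟩
  intro d hd hnd
  have hd2 : d = d20 := by
    rcases hd with h | h
    · exact absurd (by simp [h]) hnd
    · exact Set.mem_singleton_iff.mp h
  subst hd2
  rintro ⟨_, hgs⟩
  exact not_gs_both _ (by simp) (by simp) hgs

lemma cp2 : ConstrainedProcess D0 W0 [d20] := by
  refine ⟨gsp2, ?_⟩
  intro d hd hnd
  have hd1 : d = d10 := by
    rcases hd with h | h
    · exact h
    · exact absurd (by simp [Set.mem_singleton_iff.mp h]) hnd
  subst hd1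
  rintro ⟨_, hgs⟩
  exact not_gs_both _ (by simp) (by simp) hgs

lemma forward (Pr : List (Default (Fin 2))) (h : ConstrainedProcess D0 W0 Pr) :
    Pr = [d10] ∨ Pr = [d20] := by
  obtain ⟨⟨⟨hmem, hnodup, _, _⟩, hgs⟩, hmax⟩ := h
  match Pr with
  | [] =>
      exfalso
      exact hmax d10 (Or.inl rfl) (by simp) (by simpa using gsp1)
  | [d] =>
      rcases hmem d (by simp) with h | h
      · left; rw [h]
      · right; rw [Set.mem_singleton_iff.mp h]
  | d :: e :: rest =>
      exfalso
      have hd : d ∈ D0 := hmem d (by simp)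
      have he : e ∈ D0 := hmem e (by simp)
      have hne : d ≠ e := by
        rintro rfl
        simp [List.nodup_cons] at hnodup
      have hd' : d = d10 ∨ d = d20 := by simpa [D0] using hd
      have he' : e = d10 ∨ e = d20 := by simpa [D0] using he
      have hboth : d10 ∈ (d :: e :: rest) ∧ d20 ∈ (d :: e :: rest) := by
        rcases hd' with h1 | h1 <;> rcases he' with h2 | h2
        · exact absurd (h1.trans h2.symm) hne
        · exact ⟨by simp [h1], by simp [h2]⟩
        · exact ⟨by simp [h2], by simp [h1]⟩
        · exact absurd (h1.trans h2.symm) hne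
      exact not_gs_both _ hboth.1 hboth.2 hgs

end Aux

/-- The theory `⟨{(⊤, a, b), (⊤, ¬a, b)}, ∅⟩` has exactly one constrained
extension `Cn({b})`, but exactly two distinct double extensions
`⟨{a}, Cn({b})⟩` and `⟨{¬a}, Cn({b})⟩`. -/
theorem stmt13 :
    let aF : Form (Fin 2) := fun v => v 0 = true
    let naF : Form (Fin 2) := fun v => v 0 = false
    let bF : Form (Fin 2) := fun v => v 1 = true
    let d1 : Default (Fin 2) := ⟨fun _ => True, aF, bF⟩
    let d2 : Default (Fin 2) := ⟨fun _ => True, naF, bF⟩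
    let D : Set (Default (Fin 2)) := {d1, d2}
    let W : Set (Form (Fin 2)) := ∅
    ({E | ∃ Pr, ConstrainedProcess D W Pr ∧ E = ext W Pr} = {Cn ({bF} : Set (Form (Fin 2)))}) ∧
    ({p | ∃ Pr, ConstrainedProcess D W Pr ∧ p = (justSet Pr, ext W Pr)} =
      {(({aF} : Set (Form (Fin 2))), Cn ({bF} : Set (Form (Fin 2)))),
       (({naF} : Set (Form (Fin 2))), Cn ({bF} : Set (Form (Fin 2))))}) ∧
    (({aF} : Set (Form (Fin 2))), Cn ({bF} : Set (Form (Fin 2)))) ≠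
      (({naF} : Set (Form (Fin 2))), Cn ({bF} : Set (Form (Fin 2)))) := by
  refine ⟨?_, ?_, ?_⟩
  · show {E | ∃ Pr, ConstrainedProcess D0 W0 Pr ∧ E = ext W0 Pr} = {Cn ({bF0} : Set (Form (Fin 2)))}
    ext E
    constructor
    · rintro ⟨Pr, hcp, rfl⟩
      rcases forward Pr hcp with h | h <;> subst h
      · exact ext_single d10 rfl
      · exact ext_single d20 rfl
    · rintro rfl
      exact ⟨[d10], cp1, (ext_single d10 rfl).symm⟩
  · show {p | ∃ Pr, ConstrainedProcess D0 W0 Pr ∧ p = (justSet Pr, ext W0 Pr)} =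
      {(({aF0} : Set (Form (Fin 2))), Cn ({bF0} : Set (Form (Fin 2)))),
       (({naF0} : Set (Form (Fin 2))), Cn ({bF0} : Set (Form (Fin 2))))}
    ext p
    constructor
    · rintro ⟨Pr, hcp, rfl⟩
      rcases forward Pr hcp with h | h <;> subst h
      · left; rw [just_single, ext_single d10 rfl]; rfl
      · right; rw [just_single, ext_single d20 rfl]; rfl
    · rintro (rfl | rfl)
      · exact ⟨[d10], cp1, by rw [just_single, ext_single d10 rfl]; rfl⟩
      · exact ⟨[d20], cp2, by rw [just_single, ext_single d20 rfl]; rfl⟩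
  · intro h
    have h1 : ({aF0} : Set (Form (Fin 2))) = {naF0} := congrArg Prod.fst h
    have : aF0 ∈ ({naF0} : Set (Form (Fin 2))) := h1 ▸ rfl
    exact aF_ne_naF this
end

section
/- There is a bijection between the justified processes of ⟨D,W⟩ and the constrained processes of T_JC(⟨D,W⟩) such that the extensions generated by associated processes are var-equivalent with respect to the variables of ⟨D,W⟩. -/
universe u

variable {X : Type u} {m : ℕ}

/-- The extended alphabet: the original variables `X` together with `m`
disjoint fresh copies `X₁, …, X_m` of `X`. -/
abbrev VJC (X : Type u) (m : ℕ) : Type u := X ⊕ (X × Fin m)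

/-- A formula over `X` read over the extended alphabet (no renaming). -/
def lift (φ : Form X) : Form (VJC X m) := fun v => φ (fun x => v (Sum.inl x))

/-- The renaming `φ[X/X_i]` of a formula to the `i`-th copy of the alphabet. -/
def ren (i : Fin m) (φ : Form X) : Form (VJC X m) :=
  fun v => φ (fun x => v (Sum.inr (x, i)))

/-- The translation `T_JC` of the `i`-th default: the justification is moved
to the private alphabet `X_i` and the consequence is drawn on all alphabets. -/
def TJC (D : Fin m → Default X) (i : Fin m) : Default (VJC X m) :=
  ⟨lift (D i).prec,
   ren i (D i).just,
   fun v => lift (D i).cons v ∧ ∀ j : Fin m, ren j (D i).cons v⟩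

/-- The translated background theory `W ∧ W[X/X₁] ∧ ⋯ ∧ W[X/X_m]`. -/
def WJC (W : Form X) : Form (VJC X m) :=
  fun v => lift W v ∧ ∀ j : Fin m, ren j W v

section Processes

variable {V : Type u}

/-- A process of a default theory with defaults indexed by `ι` and background
formula `W`: a sequence of distinct defaults with consistent consequences, each
precondition entailed by `W` plus the earlier consequences. -/
def IsProcessIdx {ι : Type*} (Ds : ι → Default V) (W : Form V)
    (Pr : List ι) : Prop :=
  Pr.Nodup ∧ (∃ v, W v ∧ ∀ i ∈ Pr, (Ds i).cons v) ∧
    ∀ k : Fin Pr.length, ∀ v,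
      (W v ∧ ∀ j ∈ Pr.take k, (Ds j).cons v) → (Ds (Pr.get k)).prec v

/-- Local success: each justification is individually consistent with the
background theory and all consequences. -/
def LocSuccIdx {ι : Type*} (Ds : ι → Default V) (W : Form V)
    (Pr : List ι) : Prop :=
  ∀ i ∈ Pr, ∃ v, (W v ∧ ∀ j ∈ Pr, (Ds j).cons v) ∧ (Ds i).just v

/-- Global success: all justifications together are consistent with the
background theory and all consequences. -/
def GlobSuccIdx {ι : Type*} (Ds : ι → Default V) (W : Form V)
    (Pr : List ι) : Prop :=
  ∃ v, (W v ∧ ∀ j ∈ Pr, (Ds j).cons v) ∧ ∀ i ∈ Pr, (Ds i).just v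

/-- A justified process: maximal locally successful process. -/
def JustifiedIdx {ι : Type*} (Ds : ι → Default V) (W : Form V)
    (Pr : List ι) : Prop :=
  (IsProcessIdx Ds W Pr ∧ LocSuccIdx Ds W Pr) ∧
    ∀ i, i ∉ Pr →
      ¬ (IsProcessIdx Ds W (Pr ++ [i]) ∧ LocSuccIdx Ds W (Pr ++ [i]))

/-- A constrained process: maximal globally successful process. -/
def ConstrainedIdx {ι : Type*} (Ds : ι → Default V) (W : Form V)
    (Pr : List ι) : Prop :=
  (IsProcessIdx Ds W Pr ∧ GlobSuccIdx Ds W Pr) ∧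
    ∀ i, i ∉ Pr →
      ¬ (IsProcessIdx Ds W (Pr ++ [i]) ∧ GlobSuccIdx Ds W (Pr ++ [i]))

end Processes

namespace Stmt17Aux

variable {X : Type u} {m : ℕ}

/-- Copy an assignment over `X` diagonally to all copies of the alphabet. -/
def diag (v : X → Bool) : VJC X m → Bool := Sum.elim v (fun p => v p.1)

/-- Restrict an extended assignment to the original alphabet. -/
def restr0 (w : VJC X m → Bool) : X → Bool := fun x => w (Sum.inl x)

/-- Restrict an extended assignment to the `j`-th copy of the alphabet. -/
def restr (j : Fin m) (w : VJC X m → Bool) : X → Bool := fun x => w (Sum.inr (x, j))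

lemma isProcess_iff (D : Fin m → Default X) (W : Form X) (Pr : List (Fin m)) :
    IsProcessIdx D W Pr ↔ IsProcessIdx (TJC D) (WJC W) Pr := by
  constructor
  · rintro ⟨hnd, ⟨v, hWv, hcons⟩, hprec⟩
    refine ⟨hnd, ⟨diag v, ⟨⟨hWv, fun _ => hWv⟩,
      fun i hi => ⟨hcons i hi, fun _ => hcons i hi⟩⟩⟩, ?_⟩
    rintro k w ⟨⟨hW0, _⟩, hc⟩
    exact hprec k (restr0 w) ⟨hW0, fun j hj => (hc j hj).1⟩
  · rintro ⟨hnd, ⟨w, ⟨hW0, _⟩, hcons⟩, hprec⟩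
    refine ⟨hnd, ⟨restr0 w, hW0, fun i hi => (hcons i hi).1⟩, ?_⟩
    rintro k v ⟨hWv, hc⟩
    exact hprec k (diag v) ⟨⟨hWv, fun _ => hWv⟩,
      fun i hi => ⟨hc i hi, fun _ => hc i hi⟩⟩

lemma globSucc_of (D : Fin m → Default X) (W : Form X) (Pr : List (Fin m))
    (hcon : ∃ v, W v ∧ ∀ i ∈ Pr, (D i).cons v)
    (hloc : LocSuccIdx D W Pr) : GlobSuccIdx (TJC D) (WJC W) Pr := by
  classical
  obtain ⟨v0, hv0⟩ := hcon
  have key : ∀ j : Fin m, ∃ u : X → Bool,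
      (W u ∧ ∀ i ∈ Pr, (D i).cons u) ∧ (j ∈ Pr → (D j).just u) := by
    intro j
    by_cases hj : j ∈ Pr
    · obtain ⟨u, hu⟩ := hloc j hj
      exact ⟨u, hu.1, fun _ => hu.2⟩
    · exact ⟨v0, hv0, fun h => absurd h hj⟩
  choose u hu hju using key
  exact ⟨Sum.elim v0 (fun p => u p.2 p.1),
    ⟨⟨hv0.1, fun j => (hu j).1⟩,
     fun i hi => ⟨hv0.2 i hi, fun j => (hu j).2 i hi⟩⟩,
    fun i hi => hju i hi⟩

lemma locSucc_of (D : Fin m → Default X) (W : Form X) (Pr : List (Fin m))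
    (h : GlobSuccIdx (TJC D) (WJC W) Pr) : LocSuccIdx D W Pr := by
  obtain ⟨w, ⟨⟨_, hWj⟩, hcons⟩, hjust⟩ := h
  intro i hi
  exact ⟨restr i w, ⟨hWj i, fun j hj => (hcons j hj).2 i⟩, hjust i hi⟩

lemma justified_iff (D : Fin m → Default X) (W : Form X) (Pr : List (Fin m)) :
    JustifiedIdx D W Pr ↔ ConstrainedIdx (TJC D) (WJC W) Pr := by
  constructor
  · rintro ⟨⟨hp, hl⟩, hmax⟩
    refine ⟨⟨(isProcess_iff D W Pr).1 hp, globSucc_of D W Pr hp.2.1 hl⟩, ?_⟩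
    rintro i hi ⟨hp', hg'⟩
    exact hmax i hi ⟨(isProcess_iff D W _).2 hp', locSucc_of D W _ hg'⟩
  · rintro ⟨⟨hp, hg⟩, hmax⟩
    have hp' := (isProcess_iff D W Pr).2 hp
    refine ⟨⟨hp', locSucc_of D W Pr hg⟩, ?_⟩
    rintro i hi ⟨hq, hl⟩
    exact hmax i hi ⟨(isProcess_iff D W _).1 hq, globSucc_of D W _ hq.2.1 hl⟩

end Stmt17Aux

/-- There is a bijection between the justified processes of `⟨D, W⟩` and the
constrained processes of `T_JC(⟨D, W⟩)` such that the extensions generated by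
associated processes are var-equivalent with respect to the variables of
`⟨D, W⟩`. -/
theorem stmt17 [DecidableEq X] (D : Fin m → Default X) (W : Form X)
    (hW : ∃ v, W v) :
    ∃ e : {Pr : List (Fin m) // JustifiedIdx D W Pr} ≃
          {Pr : List (Fin m) // ConstrainedIdx (TJC D) (WJC W) Pr},
      ∀ p : {Pr : List (Fin m) // JustifiedIdx D W Pr}, ∀ γ : Form X,
        (∀ v, (W v ∧ ∀ i ∈ p.val, (D i).cons v) → γ v) ↔
        (∀ v, (WJC W v ∧ ∀ i ∈ (e p).val, (TJC D i).cons v) → lift γ v) := by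
  refine ⟨Equiv.subtypeEquivRight (fun Pr => Stmt17Aux.justified_iff D W Pr), ?_⟩
  intro p γ
  constructor
  · rintro h w ⟨⟨hW0, _⟩, hc⟩
    exact h (Stmt17Aux.restr0 w) ⟨hW0, fun i hi => (hc i hi).1⟩
  · rintro h v ⟨hWv, hc⟩
    exact h (Stmt17Aux.diag v) ⟨⟨hWv, fun _ => hWv⟩,
      fun i hi => ⟨hc i hi, fun _ => hc i hi⟩⟩
end
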